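/- Let N be a strongly connected symmetric directed graph on m vertices whose arcs (j,i) carry real matrices C_{ji} with n columns and orthonormal rows, and suppose kernel(C J̄ᵀ) = span(Ī), where J is the incidence matrix of N. Let N(1), N(2), N(3), … be a sequence of symmetric spanning subgraphs of N such that every arc of N appears in infinitely many of the N(t). If each agent updates x_i(t+1) = x_i(t) − (1/2) ∑_{j∈N_i(t)} w_{ij}(t) (C_{ij}ᵀC_{ij} + C_{ji}ᵀC_{ji})(x_i(t) − x_j(t)), where N_i(t) is the neighbor set of agent i in N(t) and w_{ij}(t) = 1/(1 + max{d_i(t), d_j(t)}) are the Metropolis weights of N(t) with d_i(t) = |N_i(t)|, then all m agents' states x_i(t) converge, as t → ∞, to a common limit vector in ℝ^n. -/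

import Mathlib

open Filter Matrix

/-- The number of neighbors of vertex `i` in the symmetric graph with arc set `B`. -/
def nbrCard {m : ℕ} (B : Finset (Fin m × Fin m)) (i : Fin m) : ℕ :=
  (Finset.univ.filter (fun j : Fin m => (j, i) ∈ B)).card

namespace Stmt13

variable {ι : Type*} [Fintype ι]

lemma dot_self_nonneg (v : ι → ℝ) : 0 ≤ v ⬝ᵥ v :=
  Finset.sum_nonneg fun i _ => mul_self_nonneg _

noncomputable def toE (v : ι → ℝ) : EuclideanSpace ℝ ι := (WithLp.equiv 2 (ι → ℝ)).symm v

lemma norm_toE (v : ι → ℝ) : ‖toE v‖ = Real.sqrt (v ⬝ᵥ v) := by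
  rw [EuclideanSpace.norm_eq]
  congr 1
  simp [toE, dotProduct, Real.norm_eq_abs, sq_abs, pow_two]

lemma sqrt_dot_triangle (u v : ι → ℝ) :
    Real.sqrt ((u + v) ⬝ᵥ (u + v)) ≤ Real.sqrt (u ⬝ᵥ u) + Real.sqrt (v ⬝ᵥ v) := by
  rw [← norm_toE, ← norm_toE, ← norm_toE]
  exact norm_add_le (toE u) (toE v)

lemma dot_CS (u v : ι → ℝ) : (u ⬝ᵥ v) ^ 2 ≤ (u ⬝ᵥ u) * (v ⬝ᵥ v) := by
  simpa [dotProduct, pow_two] using Finset.sum_mul_sq_le_sq_mul_sq Finset.univ u v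

lemma dot_sub_le (u v : ι → ℝ) :
    (u - v) ⬝ᵥ (u - v) ≤ 2 * (u ⬝ᵥ u) + 2 * (v ⬝ᵥ v) := by
  have h := dot_self_nonneg (u + v)
  have hc : v ⬝ᵥ u = u ⬝ᵥ v := dotProduct_comm v u
  simp only [sub_dotProduct, dotProduct_sub, add_dotProduct,
    dotProduct_add] at *
  linarith

lemma orth_contract {κ n : ℕ} (Cm : Matrix (Fin κ) (Fin n) ℝ) (h : Cm * Cmᵀ = 1)
    (u : Fin n → ℝ) : (Cm *ᵥ u) ⬝ᵥ (Cm *ᵥ u) ≤ u ⬝ᵥ u := by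
  set a := (Cm *ᵥ u) ⬝ᵥ (Cm *ᵥ u) with ha
  set b := Cmᵀ *ᵥ (Cm *ᵥ u) with hb
  have hub : u ⬝ᵥ b = a := by
    rw [hb, Matrix.dotProduct_mulVec, Matrix.vecMul_transpose]
  have hbb : b ⬝ᵥ b = a := by
    rw [hb, Matrix.dotProduct_mulVec, Matrix.vecMul_transpose, Matrix.mulVec_mulVec,
      Matrix.mulVec_mulVec, ← Matrix.mulVec_mulVec, h, Matrix.one_mulVec]
  have hcs := dot_CS u b
  rw [hub, hbb] at hcs
  nlinarith [dot_self_nonneg (Cm *ᵥ u), dot_self_nonneg u]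


variable {m n : ℕ}

noncomputable def wgtB (B : Finset (Fin m × Fin m)) (i j : Fin m) : ℝ :=
  1 / (1 + (max (nbrCard B i) (nbrCard B j) : ℝ))

def nbhd (B : Finset (Fin m × Fin m)) (i : Fin m) : Finset (Fin m) :=
  Finset.univ.filter (fun j : Fin m => (j, i) ∈ B)

variable (k : Fin m → Fin m → ℕ) (C : (j i : Fin m) → Matrix (Fin (k j i)) (Fin n) ℝ)

noncomputable def Lv (B : Finset (Fin m × Fin m)) (x : Fin m → Fin n → ℝ) :
    Fin m → Fin n → ℝ := fun i =>
  ∑ j ∈ nbhd B i, wgtB B i j • ((C i j)ᵀ * C i j + (C j i)ᵀ * C j i) *ᵥ (x i - x j)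

noncomputable def Fv (B : Finset (Fin m × Fin m)) (x : Fin m → Fin n → ℝ) :
    Fin m → Fin n → ℝ := fun i => x i - (1 / 2 : ℝ) • Lv k C B x i

def ipE (x y : Fin m → Fin n → ℝ) : ℝ := ∑ i, x i ⬝ᵥ y i

noncomputable def nsq (x : Fin m → Fin n → ℝ) : ℝ := ipE x x

lemma nsq_nonneg (x : Fin m → Fin n → ℝ) : 0 ≤ nsq x := by
  unfold nsq ipE; exact Finset.sum_nonneg fun i _ => dot_self_nonneg _

lemma dot_le_nsq (x : Fin m → Fin n → ℝ) (i : Fin m) : x i ⬝ᵥ x i ≤ nsq x := by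
  unfold nsq ipE; exact Finset.single_le_sum (fun j _ => dot_self_nonneg (x j)) (Finset.mem_univ i)

lemma nsq_eq_zero {x : Fin m → Fin n → ℝ} (h : nsq x = 0) : x = 0 := by
  funext i
  have h1 : x i ⬝ᵥ x i = 0 := by
    unfold nsq ipE at h
    have h2 := (Finset.sum_eq_zero_iff_of_nonneg
      (fun j (_ : j ∈ Finset.univ) => dot_self_nonneg (x j))).mp h
    exact h2 i (Finset.mem_univ i)
  exact dotProduct_self_eq_zero.mp h1

noncomputable def flatE (x : Fin m → Fin n → ℝ) : EuclideanSpace ℝ (Fin m × Fin n) :=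
  toE (fun p => x p.1 p.2)

lemma nsq_eq_norm (x : Fin m → Fin n → ℝ) : Real.sqrt (nsq x) = ‖flatE x‖ := by
  rw [flatE, norm_toE]
  congr 1
  simp [nsq, ipE, dotProduct, Fintype.sum_prod_type]

lemma flatE_sub (x y : Fin m → Fin n → ℝ) : flatE (x - y) = flatE x - flatE y := rfl

lemma sqrt_nsq_add_le (x y : Fin m → Fin n → ℝ) :
    Real.sqrt (nsq (x + y)) ≤ Real.sqrt (nsq x) + Real.sqrt (nsq y) := by
  have h : flatE (x + y) = flatE x + flatE y := rfl
  rw [nsq_eq_norm, nsq_eq_norm, nsq_eq_norm, h]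
  exact norm_add_le _ _

lemma coord_sq_le_nsq (x : Fin m → Fin n → ℝ) (i : Fin m) (l : Fin n) :
    (x i l) ^ 2 ≤ nsq x := by
  refine le_trans ?_ (dot_le_nsq x i)
  rw [pow_two]
  exact Finset.single_le_sum (fun r _ => mul_self_nonneg (x i r)) (Finset.mem_univ l)


variable {m n : ℕ} (k : Fin m → Fin m → ℕ) (C : (j i : Fin m) → Matrix (Fin (k j i)) (Fin n) ℝ)

lemma dotProduct_sumF {ι γ : Type*} [Fintype ι] (v : ι → ℝ) (s : Finset γ) (f : γ → ι → ℝ) :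
    v ⬝ᵥ (∑ j ∈ s, f j) = ∑ j ∈ s, v ⬝ᵥ f j := by
  unfold dotProduct
  rw [Finset.sum_comm]
  refine Finset.sum_congr rfl fun i _ => ?_
  rw [Finset.sum_apply, Finset.mul_sum]

lemma sum_swap_eq {B : Finset (Fin m × Fin m)} (hB : ∀ p ∈ B, (p.2, p.1) ∈ B)
    (f : Fin m × Fin m → ℝ) : (∑ p ∈ B, f p) = ∑ p ∈ B, f p.swap := by
  refine Finset.sum_nbij' (fun p => p.swap) (fun p => p.swap) ?_ ?_ ?_ ?_ ?_ <;>
    simp_all [Prod.swap]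

lemma sum_pairs {B : Finset (Fin m × Fin m)} (F : Fin m × Fin m → ℝ) :
    ∑ p ∈ B, F p = ∑ i : Fin m, ∑ j ∈ nbhd B i, F (j, i) :=
  Finset.sum_finset_product_right B Finset.univ _ (fun p => by simp [nbhd])

-- linearity
lemma Lv_sub (B : Finset (Fin m × Fin m)) (x y : Fin m → Fin n → ℝ) :
    Lv k C B (x - y) = Lv k C B x - Lv k C B y := by
  funext i
  simp only [Lv, Pi.sub_apply]
  rw [← Finset.sum_sub_distrib]
  refine Finset.sum_congr rfl fun j _ => ?_
  have h : (x i - y i) - (x j - y j) = (x i - x j) - (y i - y j) := by abel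
  rw [h, Matrix.mulVec_sub, smul_sub]

lemma Lv_add (B : Finset (Fin m × Fin m)) (x y : Fin m → Fin n → ℝ) :
    Lv k C B (x + y) = Lv k C B x + Lv k C B y := by
  funext i
  simp only [Lv, Pi.add_apply]
  rw [← Finset.sum_add_distrib]
  refine Finset.sum_congr rfl fun j _ => ?_
  have h : (x i + y i) - (x j + y j) = (x i - x j) + (y i - y j) := by abel
  rw [h, Matrix.mulVec_add, smul_add]

lemma Lv_smul (B : Finset (Fin m × Fin m)) (a : ℝ) (x : Fin m → Fin n → ℝ) :
    Lv k C B (a • x) = a • Lv k C B x := by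
  funext i
  simp only [Lv, Pi.smul_apply]
  rw [Finset.smul_sum]
  refine Finset.sum_congr rfl fun j _ => ?_
  have h : (a • x i) - (a • x j) = a • (x i - x j) := (smul_sub a _ _).symm
  rw [h, Matrix.mulVec_smul, smul_comm]

lemma Lv_zero (B : Finset (Fin m × Fin m)) : Lv k C B 0 = 0 := by
  have h := Lv_smul k C B 0 0
  simpa using h

lemma Fv_sub (B : Finset (Fin m × Fin m)) (x y : Fin m → Fin n → ℝ) :
    Fv k C B x - Fv k C B y = Fv k C B (x - y) := by
  funext i
  simp only [Fv, Pi.sub_apply, Lv_sub, smul_sub]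
  abel

lemma Fv_add (B : Finset (Fin m × Fin m)) (x y : Fin m → Fin n → ℝ) :
    Fv k C B (x + y) = Fv k C B x + Fv k C B y := by
  funext i
  simp only [Fv, Pi.add_apply, Lv_add, smul_add]
  abel

lemma Fv_zero (B : Finset (Fin m × Fin m)) : Fv k C B 0 = 0 := by
  funext i
  simp [Fv, Lv_zero]

-- ipE bilinearity
lemma ipE_comm (x y : Fin m → Fin n → ℝ) : ipE x y = ipE y x := by
  unfold ipE
  exact Finset.sum_congr rfl fun i _ => dotProduct_comm _ _

lemma ipE_sub_right (x y z : Fin m → Fin n → ℝ) : ipE x (y - z) = ipE x y - ipE x z := by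
  unfold ipE
  rw [← Finset.sum_sub_distrib]
  exact Finset.sum_congr rfl fun i _ => by rw [Pi.sub_apply, dotProduct_sub]

lemma ipE_add_right (x y z : Fin m → Fin n → ℝ) : ipE x (y + z) = ipE x y + ipE x z := by
  unfold ipE
  rw [← Finset.sum_add_distrib]
  exact Finset.sum_congr rfl fun i _ => by rw [Pi.add_apply, dotProduct_add]

lemma ipE_smul_right (a : ℝ) (x y : Fin m → Fin n → ℝ) : ipE x (a • y) = a * ipE x y := by
  unfold ipE
  rw [Finset.mul_sum]
  exact Finset.sum_congr rfl fun i _ => by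
    rw [Pi.smul_apply, dotProduct_smul, smul_eq_mul]

lemma ipE_add_left (x y z : Fin m → Fin n → ℝ) : ipE (x + y) z = ipE x z + ipE y z := by
  rw [ipE_comm, ipE_add_right, ipE_comm z x, ipE_comm z y]

lemma ipE_smul_left (a : ℝ) (x y : Fin m → Fin n → ℝ) : ipE (a • x) y = a * ipE x y := by
  rw [ipE_comm, ipE_smul_right, ipE_comm]

lemma nsq_sub_expand (x z : Fin m → Fin n → ℝ) :
    nsq (x - z) = nsq x - 2 * ipE x z + nsq z := by
  unfold nsq
  have h1 : ipE (x - z) (x - z) = ipE x (x - z) - ipE z (x - z) := by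
    rw [ipE_comm, ipE_sub_right, ipE_comm (x - z) x, ipE_comm (x - z) z]
  rw [h1, ipE_sub_right, ipE_sub_right, ipE_comm z x]
  ring

-- energy form
noncomputable def qf (B : Finset (Fin m × Fin m)) (x y : Fin m → Fin n → ℝ)
    (p : Fin m × Fin m) : ℝ :=
  wgtB B p.2 p.1 *
    ((C p.2 p.1 *ᵥ (x p.2 - x p.1)) ⬝ᵥ (C p.2 p.1 *ᵥ (y p.2 - y p.1)) +
     (C p.1 p.2 *ᵥ (x p.2 - x p.1)) ⬝ᵥ (C p.1 p.2 *ᵥ (y p.2 - y p.1)))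

lemma dot_D (i j : Fin m) (v u : Fin n → ℝ) :
    v ⬝ᵥ (((C i j)ᵀ * C i j + (C j i)ᵀ * C j i) *ᵥ u) =
      (C i j *ᵥ v) ⬝ᵥ (C i j *ᵥ u) + (C j i *ᵥ v) ⬝ᵥ (C j i *ᵥ u) := by
  rw [Matrix.add_mulVec, dotProduct_add,
    ← Matrix.mulVec_mulVec, Matrix.dotProduct_mulVec (A := (C i j)ᵀ), Matrix.vecMul_transpose,
    ← Matrix.mulVec_mulVec, Matrix.dotProduct_mulVec (A := (C j i)ᵀ), Matrix.vecMul_transpose]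

lemma ipE_Lv_eq {B : Finset (Fin m × Fin m)} (hB : ∀ p ∈ B, (p.2, p.1) ∈ B)
    (x y : Fin m → Fin n → ℝ) :
    ipE x (Lv k C B y) = (1 / 2) * ∑ p ∈ B, qf k C B x y p := by
  set g : Fin m × Fin m → ℝ := fun p =>
    wgtB B p.2 p.1 * (x p.2 ⬝ᵥ (((C p.2 p.1)ᵀ * C p.2 p.1 + (C p.1 p.2)ᵀ * C p.1 p.2) *ᵥ
      (y p.2 - y p.1))) with hgdef
  have hg : ipE x (Lv k C B y) = ∑ p ∈ B, g p := by
    rw [sum_pairs (B := B) g]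
    unfold ipE Lv
    refine Finset.sum_congr rfl fun i _ => ?_
    rw [dotProduct_sumF]
    refine Finset.sum_congr rfl fun j _ => ?_
    rw [dotProduct_smul, hgdef, smul_eq_mul]
  have hgs : ∀ p : Fin m × Fin m, g p + g p.swap = qf k C B x y p := by
    intro p
    have hw : wgtB B p.1 p.2 = wgtB B p.2 p.1 := by unfold wgtB; rw [max_comm]
    have hDswap : ((C p.1 p.2)ᵀ * C p.1 p.2 + (C p.2 p.1)ᵀ * C p.2 p.1)
        = ((C p.2 p.1)ᵀ * C p.2 p.1 + (C p.1 p.2)ᵀ * C p.1 p.2) := add_comm _ _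
    have hneg : y p.1 - y p.2 = -(y p.2 - y p.1) := (neg_sub _ _).symm
    simp only [hgdef, Prod.fst_swap, Prod.snd_swap]
    rw [hw, hDswap, hneg, Matrix.mulVec_neg, dotProduct_neg, ← mul_add]
    have h2 : x p.2 ⬝ᵥ (((C p.2 p.1)ᵀ * C p.2 p.1 + (C p.1 p.2)ᵀ * C p.1 p.2) *ᵥ (y p.2 - y p.1))
        + -(x p.1 ⬝ᵥ (((C p.2 p.1)ᵀ * C p.2 p.1 + (C p.1 p.2)ᵀ * C p.1 p.2) *ᵥ (y p.2 - y p.1)))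
        = (x p.2 - x p.1) ⬝ᵥ (((C p.2 p.1)ᵀ * C p.2 p.1 + (C p.1 p.2)ᵀ * C p.1 p.2) *ᵥ
          (y p.2 - y p.1)) := by
      rw [sub_dotProduct]; ring
    rw [h2, dot_D]
    unfold qf
    rw [add_comm ((C p.2 p.1 *ᵥ (x p.2 - x p.1)) ⬝ᵥ (C p.2 p.1 *ᵥ (y p.2 - y p.1)))]
  have hswap : (∑ p ∈ B, g p) = ∑ p ∈ B, g p.swap := sum_swap_eq hB g
  have h2m : (2 : ℝ) * ipE x (Lv k C B y) = ∑ p ∈ B, qf k C B x y p := by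
    rw [two_mul, hg]
    nth_rewrite 2 [hswap]
    rw [← Finset.sum_add_distrib]
    exact Finset.sum_congr rfl fun p _ => hgs p
  linarith [h2m]


-- weight bounds
lemma nbrCard_le (B : Finset (Fin m × Fin m)) (i : Fin m) : nbrCard B i ≤ m := by
  unfold nbrCard
  calc (Finset.univ.filter (fun j : Fin m => (j, i) ∈ B)).card
      ≤ (Finset.univ : Finset (Fin m)).card := Finset.card_filter_le _ _
    _ = m := by simp

lemma wgt_pos (B : Finset (Fin m × Fin m)) (i j : Fin m) : 0 < wgtB B i j := by
  unfold wgtB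
  positivity

lemma wgt_ge (B : Finset (Fin m × Fin m)) (i j : Fin m) :
    1 / ((m : ℝ) + 1) ≤ wgtB B i j := by
  unfold wgtB
  have h1 : (max (nbrCard B i) (nbrCard B j) : ℝ) ≤ m := by
    have := max_le (nbrCard_le B i) (nbrCard_le B j)
    exact_mod_cast this
  have h2 : (0:ℝ) < 1 + (max (nbrCard B i) (nbrCard B j) : ℝ) := by positivity
  rw [div_le_div_iff₀ (by positivity) h2]
  linarith

lemma sum_wgt_le (B : Finset (Fin m × Fin m)) (i : Fin m) :
    ∑ j ∈ nbhd B i, wgtB B i j ≤ (m : ℝ) / (m + 1) := by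
  have hd : (nbhd B i).card = nbrCard B i := rfl
  have hle : ∀ j ∈ nbhd B i, wgtB B i j ≤ 1 / (1 + (nbrCard B i : ℝ)) := by
    intro j _
    unfold wgtB
    have h1 : (nbrCard B i : ℝ) ≤ (max (nbrCard B i) (nbrCard B j) : ℝ) := by
      exact_mod_cast le_max_left _ _
    have h2 : (0:ℝ) < 1 + (max (nbrCard B i) (nbrCard B j) : ℝ) := by positivity
    rw [div_le_div_iff₀ h2 (by positivity)]
    linarith
  calc ∑ j ∈ nbhd B i, wgtB B i j ≤ ∑ _j ∈ nbhd B i, 1 / (1 + (nbrCard B i : ℝ)) :=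
        Finset.sum_le_sum hle
    _ = (nbrCard B i : ℝ) * (1 / (1 + (nbrCard B i : ℝ))) := by
        rw [Finset.sum_const, hd, nsmul_eq_mul]
    _ ≤ (m : ℝ) / (m + 1) := by
        set d := (nbrCard B i : ℝ) with hddef
        have hd0 : (0:ℝ) ≤ d := by positivity
        have hdm : d ≤ (m:ℝ) := by rw [hddef]; exact_mod_cast nbrCard_le B i
        rw [mul_one_div, div_le_div_iff₀ (by positivity) (by positivity)]
        nlinarith

lemma qf_self_nonneg (B : Finset (Fin m × Fin m)) (x : Fin m → Fin n → ℝ)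
    (p : Fin m × Fin m) : 0 ≤ qf k C B x x p := by
  unfold qf
  exact mul_nonneg (wgt_pos B _ _).le (add_nonneg (dot_self_nonneg _) (dot_self_nonneg _))

lemma Qv_nonneg {B : Finset (Fin m × Fin m)} (hB : ∀ p ∈ B, (p.2, p.1) ∈ B)
    (x : Fin m → Fin n → ℝ) : 0 ≤ ipE x (Lv k C B x) := by
  rw [ipE_Lv_eq k C hB]
  exact mul_nonneg (by norm_num) (Finset.sum_nonneg fun p _ => qf_self_nonneg k C B x p)

lemma Qv_le_nsq {B : Finset (Fin m × Fin m)} (hB : ∀ p ∈ B, (p.2, p.1) ∈ B)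
    (horthB : ∀ p ∈ B, C p.1 p.2 * (C p.1 p.2)ᵀ = 1 ∧ C p.2 p.1 * (C p.2 p.1)ᵀ = 1)
    (x : Fin m → Fin n → ℝ) :
    ipE x (Lv k C B x) ≤ (4 * m / (m + 1)) * nsq x := by
  rw [ipE_Lv_eq k C hB]
  set a : Fin m → ℝ := fun i => x i ⬝ᵥ x i with hadef
  have h1 : ∀ p ∈ B, qf k C B x x p ≤ wgtB B p.2 p.1 * (4 * a p.2 + 4 * a p.1) := by
    intro p hp
    have hc1 := orth_contract (C p.2 p.1) (horthB p hp).2 (x p.2 - x p.1)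
    have hc2 := orth_contract (C p.1 p.2) (horthB p hp).1 (x p.2 - x p.1)
    have hsub := dot_sub_le (x p.2) (x p.1)
    have hw := wgt_pos B p.2 p.1
    unfold qf
    have hinner : (C p.2 p.1 *ᵥ (x p.2 - x p.1)) ⬝ᵥ (C p.2 p.1 *ᵥ (x p.2 - x p.1)) +
        (C p.1 p.2 *ᵥ (x p.2 - x p.1)) ⬝ᵥ (C p.1 p.2 *ᵥ (x p.2 - x p.1))
        ≤ 4 * a p.2 + 4 * a p.1 := by
      simp only [hadef]
      linarith
    exact mul_le_mul_of_nonneg_left hinner hw.le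
  have h2 : (∑ p ∈ B, qf k C B x x p) ≤ ∑ p ∈ B, wgtB B p.2 p.1 * (4 * a p.2 + 4 * a p.1) :=
    Finset.sum_le_sum h1
  have hs : ∑ p ∈ B, wgtB B p.2 p.1 * a p.1 = ∑ p ∈ B, wgtB B p.2 p.1 * a p.2 := by
    rw [sum_swap_eq hB (fun p => wgtB B p.2 p.1 * a p.1)]
    refine Finset.sum_congr rfl fun p _ => ?_
    simp only [Prod.fst_swap, Prod.snd_swap]
    unfold wgtB
    rw [max_comm]
  have h3 : ∑ p ∈ B, wgtB B p.2 p.1 * (4 * a p.2 + 4 * a p.1)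
      = 8 * ∑ p ∈ B, wgtB B p.2 p.1 * a p.2 := by
    calc ∑ p ∈ B, wgtB B p.2 p.1 * (4 * a p.2 + 4 * a p.1)
        = (∑ p ∈ B, 4 * (wgtB B p.2 p.1 * a p.2)) + ∑ p ∈ B, 4 * (wgtB B p.2 p.1 * a p.1) := by
          rw [← Finset.sum_add_distrib]
          exact Finset.sum_congr rfl fun p _ => by ring
      _ = 4 * (∑ p ∈ B, wgtB B p.2 p.1 * a p.2) + 4 * ∑ p ∈ B, wgtB B p.2 p.1 * a p.1 := by
          rw [← Finset.mul_sum, ← Finset.mul_sum]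
      _ = 8 * ∑ p ∈ B, wgtB B p.2 p.1 * a p.2 := by rw [hs]; ring
  have h4 : ∑ p ∈ B, wgtB B p.2 p.1 * a p.2 ≤ ((m : ℝ) / (m + 1)) * nsq x := by
    rw [sum_pairs (fun p => wgtB B p.2 p.1 * a p.2)]
    have hi : ∀ i : Fin m, ∑ j ∈ nbhd B i, wgtB B i j * a i ≤ ((m : ℝ)/(m+1)) * a i := by
      intro i
      rw [← Finset.sum_mul]
      exact mul_le_mul_of_nonneg_right (sum_wgt_le B i) (dot_self_nonneg _)
    calc ∑ i, ∑ j ∈ nbhd B i, wgtB B i j * a i ≤ ∑ i, ((m : ℝ)/(m+1)) * a i :=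
          Finset.sum_le_sum fun i _ => hi i
      _ = ((m : ℝ)/(m+1)) * nsq x := by
          rw [← Finset.mul_sum]
          rfl
  have hm : (0:ℝ) ≤ (m : ℝ)/(m+1) := by positivity
  have hnsq := nsq_nonneg x
  calc (1/2 : ℝ) * ∑ p ∈ B, qf k C B x x p
      ≤ (1/2 : ℝ) * (8 * (((m : ℝ)/(m+1)) * nsq x)) := by
        have := h2.trans (le_of_eq h3)
        have h8 : (8:ℝ) * (∑ p ∈ B, wgtB B p.2 p.1 * a p.2) ≤ 8 * (((m : ℝ)/(m+1)) * nsq x) := by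
          linarith
        linarith
    _ = (4 * m / (m + 1)) * nsq x := by ring

lemma qf_symm (B : Finset (Fin m × Fin m)) (x y : Fin m → Fin n → ℝ) (p : Fin m × Fin m) :
    qf k C B x y p = qf k C B y x p := by
  unfold qf
  rw [dotProduct_comm, dotProduct_comm (C p.1 p.2 *ᵥ (x p.2 - x p.1))]

lemma ipE_Lv_symm {B : Finset (Fin m × Fin m)} (hB : ∀ p ∈ B, (p.2, p.1) ∈ B)
    (x y : Fin m → Fin n → ℝ) : ipE x (Lv k C B y) = ipE y (Lv k C B x) := by
  rw [ipE_Lv_eq k C hB, ipE_Lv_eq k C hB]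
  congr 1
  exact Finset.sum_congr rfl fun p _ => qf_symm k C B x y p

lemma ipE_Lv_CS {B : Finset (Fin m × Fin m)} (hB : ∀ p ∈ B, (p.2, p.1) ∈ B)
    (x y : Fin m → Fin n → ℝ) :
    (ipE x (Lv k C B y)) ^ 2 ≤ (ipE x (Lv k C B x)) * (ipE y (Lv k C B y)) := by
  have hquad : ∀ t : ℝ, 0 ≤ (ipE y (Lv k C B y)) * (t * t) +
      (2 * ipE x (Lv k C B y)) * t + ipE x (Lv k C B x) := by
    intro t
    have h0 := Qv_nonneg k C hB (x + t • y)
    rw [Lv_add, Lv_smul, ipE_add_left, ipE_add_right, ipE_add_right,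
      ipE_smul_left, ipE_smul_right, ipE_smul_left, ipE_smul_right] at h0
    have hsym := ipE_Lv_symm k C hB y x
    rw [hsym] at h0
    ring_nf at h0 ⊢
    linarith [h0]
  have hd := discrim_le_zero hquad
  unfold discrim at hd
  nlinarith [hd]

lemma nsq_Lv_le {B : Finset (Fin m × Fin m)} (hB : ∀ p ∈ B, (p.2, p.1) ∈ B)
    (horthB : ∀ p ∈ B, C p.1 p.2 * (C p.1 p.2)ᵀ = 1 ∧ C p.2 p.1 * (C p.2 p.1)ᵀ = 1)
    (x : Fin m → Fin n → ℝ) :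
    nsq (Lv k C B x) ≤ (4 * m / (m + 1)) * ipE x (Lv k C B x) := by
  have hcs := ipE_Lv_CS k C hB x (Lv k C B x)
  have hsymL := ipE_Lv_symm k C hB x (Lv k C B x)
  have h1 : ipE (Lv k C B x) (Lv k C B x) = nsq (Lv k C B x) := rfl
  have h2 : ipE (Lv k C B x) (Lv k C B (Lv k C B x)) ≤ (4 * m / (m + 1)) * nsq (Lv k C B x) :=
    Qv_le_nsq k C hB horthB (Lv k C B x)
  have h3 := Qv_nonneg k C hB x
  have h4 := nsq_nonneg (Lv k C B x)
  have hK : (0:ℝ) ≤ 4 * m / (m + 1) := by positivity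
  -- hcs : (ipE x (Lv (Lv x)))^2 ≤ Qx * Q(Lx) ; want instead b(x, Lx) = nsq Lx form
  -- use CS with (Lv x) as first arg:
  have hcs2 := ipE_Lv_CS k C hB (Lv k C B x) x
  rw [h1] at hcs2
  -- hcs2 : (nsq Lx)^2 ≤ ipE Lx (Lv Lx) * ipE x (Lv x)
  rcases h4.eq_or_lt with h|h
  · rw [← h]
    exact mul_nonneg hK h3
  · have h6 : nsq (Lv k C B x) * nsq (Lv k C B x) ≤
        ((4 * m / (m + 1)) * ipE x (Lv k C B x)) * nsq (Lv k C B x) := by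
      nlinarith [hcs2, mul_le_mul_of_nonneg_right h2 h3]
    exact le_of_mul_le_mul_right h6 h

lemma nsq_Fv_le {B : Finset (Fin m × Fin m)} (hB : ∀ p ∈ B, (p.2, p.1) ∈ B)
    (horthB : ∀ p ∈ B, C p.1 p.2 * (C p.1 p.2)ᵀ = 1 ∧ C p.2 p.1 * (C p.2 p.1)ᵀ = 1)
    (x : Fin m → Fin n → ℝ) :
    nsq (Fv k C B x) ≤ nsq x - (1 / (m + 1)) * ipE x (Lv k C B x) := by
  have hK := nsq_Lv_le k C hB horthB x
  have hexp : nsq (Fv k C B x) = nsq x - ipE x (Lv k C B x) + (1/4) * nsq (Lv k C B x) := by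
    have hf : Fv k C B x = x - (1/2 : ℝ) • Lv k C B x := rfl
    rw [hf, nsq_sub_expand, ipE_smul_right]
    have hq : nsq ((1/2 : ℝ) • Lv k C B x) = (1/4) * nsq (Lv k C B x) := by
      unfold nsq
      rw [ipE_smul_left, ipE_smul_right]
      ring
    rw [hq]
    ring
  have hm : (0:ℝ) < (m:ℝ) + 1 := by positivity
  have harith : (1/4 : ℝ) * ((4 * m / (m + 1)) * ipE x (Lv k C B x))
      = ipE x (Lv k C B x) - (1 / (m+1)) * ipE x (Lv k C B x) := by
    field_simp
    ring
  linarith [hexp, hK, harith]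

lemma nsq_Fv_mono {B : Finset (Fin m × Fin m)} (hB : ∀ p ∈ B, (p.2, p.1) ∈ B)
    (horthB : ∀ p ∈ B, C p.1 p.2 * (C p.1 p.2)ᵀ = 1 ∧ C p.2 p.1 * (C p.2 p.1)ᵀ = 1)
    (x : Fin m → Fin n → ℝ) : nsq (Fv k C B x) ≤ nsq x := by
  have h1 := nsq_Fv_le k C hB horthB x
  have h2 := Qv_nonneg k C hB x
  have hm : (0:ℝ) < 1 / ((m:ℝ) + 1) := by positivity
  nlinarith

lemma Fv_fix {B : Finset (Fin m × Fin m)} (hB : ∀ p ∈ B, (p.2, p.1) ∈ B)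
    (horthB : ∀ p ∈ B, C p.1 p.2 * (C p.1 p.2)ᵀ = 1 ∧ C p.2 p.1 * (C p.2 p.1)ᵀ = 1)
    (x : Fin m → Fin n → ℝ) (h : nsq x ≤ nsq (Fv k C B x)) : Fv k C B x = x := by
  have h1 := nsq_Fv_le k C hB horthB x
  have h2 := Qv_nonneg k C hB x
  have hm : (0:ℝ) < 1 / ((m:ℝ) + 1) := by positivity
  have hQ : ipE x (Lv k C B x) = 0 := by nlinarith
  have hL : nsq (Lv k C B x) ≤ 0 := by
    have := nsq_Lv_le k C hB horthB x
    rw [hQ] at this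
    simpa using this
  have hL0 : Lv k C B x = 0 := nsq_eq_zero (le_antisymm hL (nsq_nonneg _))
  funext i
  show x i - (1/2 : ℝ) • Lv k C B x i = x i
  rw [hL0]
  simp

lemma arc_term_le {B : Finset (Fin m × Fin m)} (hB : ∀ p ∈ B, (p.2, p.1) ∈ B)
    {p : Fin m × Fin m} (hp : p ∈ B) (x : Fin m → Fin n → ℝ) :
    (C p.1 p.2 *ᵥ (x p.2 - x p.1)) ⬝ᵥ (C p.1 p.2 *ᵥ (x p.2 - x p.1)) ≤
      (2 * ((m:ℝ) + 1)) * ipE x (Lv k C B x) := by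
  rw [ipE_Lv_eq k C hB]
  set T := (C p.1 p.2 *ᵥ (x p.2 - x p.1)) ⬝ᵥ (C p.1 p.2 *ᵥ (x p.2 - x p.1)) with hT
  have hT0 : 0 ≤ T := dot_self_nonneg _
  have hsingle : qf k C B x x p ≤ ∑ q ∈ B, qf k C B x x q :=
    Finset.single_le_sum (fun q _ => qf_self_nonneg k C B x q) hp
  have h1 : (1 / ((m:ℝ) + 1)) * T ≤ qf k C B x x p := by
    unfold qf
    have hw := wgt_ge B p.2 p.1
    have hd := dot_self_nonneg (C p.2 p.1 *ᵥ (x p.2 - x p.1))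
    have hwp := wgt_pos B p.2 p.1
    nlinarith [mul_le_mul_of_nonneg_right hw hT0]
  have hm : (0:ℝ) < (m:ℝ) + 1 := by positivity
  have h2 : (1 / ((m:ℝ) + 1)) * T ≤ ∑ q ∈ B, qf k C B x x q := h1.trans hsingle
  have h3 := mul_le_mul_of_nonneg_left h2 (le_of_lt hm)
  have h4 : ((m:ℝ) + 1) * ((1 / ((m:ℝ) + 1)) * T) = T := by
    field_simp
  nlinarith [h3, h4]


lemma nsq_neg (y : Fin m → Fin n → ℝ) : nsq (-y) = nsq y := by
  unfold nsq ipE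
  refine Finset.sum_congr rfl fun i _ => ?_
  rw [Pi.neg_apply, neg_dotProduct, dotProduct_neg, neg_neg]

end Stmt13

/-- On a strongly connected symmetric directed graph `N` (arc set `A`, matrix
`C j i` with orthonormal rows on arc `(j,i)`) that is well-configured, if the time-varying
symmetric spanning subgraphs `B t ⊆ A` are such that every arc of `A` appears infinitely often,
then the Metropolis-weight algorithm
`x i (t+1) = x i t − (1/2) ∑_{j ∈ N_i(t)} w i j t • (C i jᵀ C i j + C j iᵀ C j i)(x i t − x j t)`
with `w i j t = 1/(1 + max (dᵢ t) (dⱼ t))` drives all agents to a common limit. -/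
theorem stmt_13 (m n : ℕ) (A : Finset (Fin m × Fin m))
    (hsym : ∀ p ∈ A, (p.2, p.1) ∈ A)
    (hsc : ∀ u v : Fin m, Relation.ReflTransGen (fun a b => (a, b) ∈ A) u v)
    (k : Fin m → Fin m → ℕ)
    (C : (j i : Fin m) → Matrix (Fin (k j i)) (Fin n) ℝ)
    (horth : ∀ p ∈ A, C p.1 p.2 * (C p.1 p.2)ᵀ = 1)
    (hwc : ∀ x : Fin m → (Fin n → ℝ),
      (∀ j i : Fin m, (j, i) ∈ A → (C j i).mulVec (x j - x i) = 0) ↔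
        ∃ z : Fin n → ℝ, ∀ i, x i = z)
    (B : ℕ → Finset (Fin m × Fin m))
    (hsub : ∀ t, B t ⊆ A)
    (hsymB : ∀ t, ∀ p ∈ B t, (p.2, p.1) ∈ B t)
    (hio : ∀ p ∈ A, ∀ T : ℕ, ∃ t, T ≤ t ∧ p ∈ B t)
    (x : ℕ → Fin m → (Fin n → ℝ))
    (hupd : ∀ t (i : Fin m), x (t + 1) i = x t i -
      (1 / 2 : ℝ) • ∑ j ∈ Finset.univ.filter (fun j : Fin m => (j, i) ∈ B t),
        (1 / (1 + (max (nbrCard (B t) i) (nbrCard (B t) j) : ℝ))) •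
          ((C i j)ᵀ * C i j + (C j i)ᵀ * C j i).mulVec (x t i - x t j)) :
    ∃ z : Fin n → ℝ, ∀ i : Fin m, Tendsto (fun t => x t i) atTop (nhds z) := by
  classical
  have horthB : ∀ t, ∀ p ∈ B t, C p.1 p.2 * (C p.1 p.2)ᵀ = 1 ∧
      C p.2 p.1 * (C p.2 p.1)ᵀ = 1 :=
    fun t p hp => ⟨horth p (hsub t hp), horth (p.2, p.1) (hsym p (hsub t hp))⟩
  have hxF : ∀ t, x (t + 1) = Stmt13.Fv k C (B t) (x t) := by
    intro t
    funext i
    rw [hupd t i]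
    rfl
  -- norm sequence
  set ns : ℕ → ℝ := fun t => Stmt13.nsq (x t) with hnsdef
  have hmono : ∀ t, ns (t + 1) ≤ ns t := by
    intro t
    show Stmt13.nsq (x (t+1)) ≤ Stmt13.nsq (x t)
    rw [hxF t]
    exact Stmt13.nsq_Fv_mono k C (hsymB t) (horthB t) (x t)
  have hanti : Antitone ns := antitone_nat_of_succ_le hmono
  have hbdd : BddBelow (Set.range ns) :=
    ⟨0, fun r ⟨t, ht⟩ => ht ▸ Stmt13.nsq_nonneg (x t)⟩
  set c := ⨅ t, ns t with hcdef
  have hlim : Tendsto ns atTop (nhds c) := tendsto_atTop_ciInf hanti hbdd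
  have hcle : ∀ t, c ≤ ns t := fun t => ciInf_le hbdd t
  have hc0 : 0 ≤ c := le_ciInf fun t => Stmt13.nsq_nonneg (x t)
  -- energy decay
  set Q : ℕ → ℝ := fun t => Stmt13.ipE (x t) (Stmt13.Lv k C (B t) (x t)) with hQdef
  have hQ0 : ∀ t, 0 ≤ Q t := fun t => Stmt13.Qv_nonneg k C (hsymB t) (x t)
  have hdec : ∀ t, Q t ≤ ((m:ℝ) + 1) * (ns t - ns (t + 1)) := by
    intro t
    have h := Stmt13.nsq_Fv_le k C (hsymB t) (horthB t) (x t)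
    rw [← hxF t] at h
    have hm1 : (0:ℝ) < (m:ℝ) + 1 := by positivity
    have h2 : (1 / ((m:ℝ) + 1)) * Q t ≤ ns t - ns (t + 1) := by
      have hns1 : ns (t+1) = Stmt13.nsq (x (t+1)) := rfl
      have hns2 : ns t = Stmt13.nsq (x t) := rfl
      rw [hns1, hns2]
      linarith [h]
    calc Q t = ((m:ℝ) + 1) * ((1 / ((m:ℝ) + 1)) * Q t) := by field_simp
      _ ≤ ((m:ℝ) + 1) * (ns t - ns (t + 1)) := mul_le_mul_of_nonneg_left h2 hm1.le
  have hQtend : Tendsto Q atTop (nhds 0) := by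
    have h1 : Tendsto (fun t => ns (t + 1)) atTop (nhds c) :=
      hlim.comp (tendsto_add_atTop_nat 1)
    have hupper : Tendsto (fun t => ((m:ℝ) + 1) * (ns t - ns (t + 1))) atTop (nhds 0) := by
      have := (hlim.sub h1).const_mul ((m:ℝ) + 1)
      simpa using this
    exact squeeze_zero hQ0 hdec hupper
  -- Bolzano-Weierstrass
  set u : ℕ → EuclideanSpace ℝ (Fin m × Fin n) := fun t => Stmt13.flatE (x t) with hudef
  have hub : ∀ t, u t ∈ Metric.closedBall (0 : EuclideanSpace ℝ (Fin m × Fin n))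
      (Real.sqrt (ns 0)) := by
    intro t
    rw [Metric.mem_closedBall, dist_zero_right]
    show ‖Stmt13.flatE (x t)‖ ≤ Real.sqrt (ns 0)
    rw [← Stmt13.nsq_eq_norm]
    exact Real.sqrt_le_sqrt (hanti (Nat.zero_le t))
  obtain ⟨a, -, φ, hφmono, hφtend⟩ :=
    tendsto_subseq_of_bounded Metric.isBounded_closedBall hub
  set xs : Fin m → Fin n → ℝ := fun i l => a (i, l) with hxsdef
  have hfa : Stmt13.flatE xs = a := by
    ext p
    rfl
  -- distance to cluster point
  set dd : ℕ → ℝ := fun t => Stmt13.nsq (x t - xs) with hdddef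
  have hddnn : ∀ t, 0 ≤ dd t := fun t => Stmt13.nsq_nonneg _
  have hddeq : ∀ t, dd t = ‖u t - a‖ ^ 2 := by
    intro t
    have h1 := Stmt13.nsq_eq_norm (x t - xs)
    rw [Stmt13.flatE_sub, hfa] at h1
    have h0 := Stmt13.nsq_nonneg (x t - xs)
    have h2 := Real.sq_sqrt h0
    show Stmt13.nsq (x t - xs) = ‖u t - a‖ ^ 2
    rw [← h2, h1]
  have hRtend : Tendsto (fun j => dd (φ j)) atTop (nhds 0) := by
    have h1 : Tendsto (fun j => ‖u (φ j) - a‖) atTop (nhds 0) := by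
      have := tendsto_iff_norm_sub_tendsto_zero.mp hφtend
      simpa using this
    have h2 : Tendsto (fun j => ‖u (φ j) - a‖ ^ 2) atTop (nhds 0) := by
      have := h1.pow 2
      simpa using this
    have h3 : (fun j => dd (φ j)) = fun j => ‖u (φ j) - a‖ ^ 2 := funext fun j => hddeq (φ j)
    rw [h3]
    exact h2
  -- nsq xs = c
  have hxc : Stmt13.nsq xs = c := by
    have h1 : Tendsto (fun j => Real.sqrt (ns (φ j))) atTop (nhds (Real.sqrt c)) :=
      (Real.continuous_sqrt.tendsto c).comp (hlim.comp hφmono.tendsto_atTop)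
    have h2 : Tendsto (fun j => Real.sqrt (dd (φ j))) atTop (nhds 0) := by
      have := (Real.continuous_sqrt.tendsto 0).comp hRtend
      simpa [Function.comp_def] using this
    have h3 : ∀ j, |Real.sqrt (ns (φ j)) - Real.sqrt (Stmt13.nsq xs)| ≤
        Real.sqrt (dd (φ j)) := by
      intro j
      rw [abs_sub_le_iff]
      constructor
      · have h4 := Stmt13.sqrt_nsq_add_le xs (x (φ j) - xs)
        have h5 : xs + (x (φ j) - xs) = x (φ j) := by abel
        rw [h5] at h4
        have : ns (φ j) = Stmt13.nsq (x (φ j)) := rfl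
        rw [this]
        linarith [h4]
      · have h4 := Stmt13.sqrt_nsq_add_le (x (φ j)) (xs - x (φ j))
        have h5 : x (φ j) + (xs - x (φ j)) = xs := by abel
        rw [h5] at h4
        have h6 : Stmt13.nsq (xs - x (φ j)) = dd (φ j) := by
          show Stmt13.nsq (xs - x (φ j)) = Stmt13.nsq (x (φ j) - xs)
          rw [show xs - x (φ j) = -(x (φ j) - xs) by abel, Stmt13.nsq_neg]
        rw [h6] at h4
        have : ns (φ j) = Stmt13.nsq (x (φ j)) := rfl
        rw [this]
        linarith [h4]
      -- h3 done
    have h5 : Tendsto (fun j => Real.sqrt (ns (φ j)) - Real.sqrt (Stmt13.nsq xs))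
        atTop (nhds 0) := by
      refine squeeze_zero_norm (fun j => ?_) h2
      simpa [Real.norm_eq_abs] using h3 j
    have h4 : Tendsto (fun j => Real.sqrt (ns (φ j))) atTop
        (nhds (Real.sqrt (Stmt13.nsq xs))) := by
      have := h5.add_const (Real.sqrt (Stmt13.nsq xs))
      simpa using this
    have h6 := tendsto_nhds_unique h4 h1
    have h7 := Real.sq_sqrt (Stmt13.nsq_nonneg xs)
    have h8 := Real.sq_sqrt hc0
    calc Stmt13.nsq xs = Real.sqrt (Stmt13.nsq xs) ^ 2 := h7.symm
      _ = Real.sqrt c ^ 2 := by rw [h6]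
      _ = c := h8
  -- key fixed-point threshold
  have hkey : ∃ e : ℝ, 0 < e ∧ ∀ t, Stmt13.nsq (x t - xs) ≤ e →
      Stmt13.Fv k C (B t) xs = xs := by
    rcases eq_or_lt_of_le hc0 with hceq | hcpos
    · have hxs0 : xs = 0 := Stmt13.nsq_eq_zero (by rw [hxc, ← hceq])
      exact ⟨1, one_pos, fun t _ => by rw [hxs0]; exact Stmt13.Fv_zero k C (B t)⟩
    · set bad : Finset (Finset (Fin m × Fin m)) := Finset.univ.filter
        (fun v => (∀ p ∈ v, p ∈ A) ∧ (∀ p ∈ v, (p.2, p.1) ∈ v) ∧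
          Stmt13.Fv k C v xs ≠ xs) with hbaddef
      by_cases hne : bad.Nonempty
      · set δ := bad.sup' hne (fun v => Stmt13.nsq (Stmt13.Fv k C v xs)) with hδdef
        have hδlt : δ < c := by
          rw [hδdef, Finset.sup'_lt_iff]
          intro v hv
          rw [hbaddef, Finset.mem_filter] at hv
          obtain ⟨-, hvA, hvsym, hvne⟩ := hv
          have horthv : ∀ p ∈ v, C p.1 p.2 * (C p.1 p.2)ᵀ = 1 ∧
              C p.2 p.1 * (C p.2 p.1)ᵀ = 1 :=
            fun p hp => ⟨horth p (hvA p hp), horth (p.2, p.1) (hsym p (hvA p hp))⟩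
          by_contra hge
          push_neg at hge
          exact hvne (Stmt13.Fv_fix k C hvsym horthv xs (by rw [hxc]; exact hge))
        set s1 := Real.sqrt c with hs1def
        set s2 := Real.sqrt δ with hs2def
        have hs1pos : 0 < s1 := Real.sqrt_pos.mpr hcpos
        have hs20 : 0 ≤ s2 := Real.sqrt_nonneg _
        have hs21 : s2 < s1 := by
          rcases le_or_gt δ 0 with h | h
          · have h0 : s2 = 0 := Real.sqrt_eq_zero'.mpr (by linarith)
            rw [h0]
            exact hs1pos
          · exact Real.sqrt_lt_sqrt h.le hδlt
        refine ⟨((s1 - s2) / 2) ^ 2, pow_pos (by linarith) 2, fun t hts => ?_⟩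
        by_contra hne2
        have hmem : B t ∈ bad := by
          rw [hbaddef, Finset.mem_filter]
          exact ⟨Finset.mem_univ _, fun p hp => hsub t hp, hsymB t, hne2⟩
        have hle : Stmt13.nsq (Stmt13.Fv k C (B t) xs) ≤ δ :=
          Finset.le_sup' (fun v => Stmt13.nsq (Stmt13.Fv k C v xs)) hmem
        have h1 : c ≤ Stmt13.nsq (x (t + 1)) := hcle (t + 1)
        have h2 : x (t + 1) = Stmt13.Fv k C (B t) xs + Stmt13.Fv k C (B t) (x t - xs) := by
          rw [hxF t, ← Stmt13.Fv_add, show xs + (x t - xs) = x t by abel]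
        have h3 : Real.sqrt (Stmt13.nsq (x (t + 1))) ≤ s2 + (s1 - s2) / 2 := by
          rw [h2]
          refine (Stmt13.sqrt_nsq_add_le _ _).trans ?_
          have ha : Real.sqrt (Stmt13.nsq (Stmt13.Fv k C (B t) xs)) ≤ s2 :=
            Real.sqrt_le_sqrt hle
          have hb : Stmt13.nsq (Stmt13.Fv k C (B t) (x t - xs)) ≤ ((s1 - s2) / 2) ^ 2 :=
            (Stmt13.nsq_Fv_mono k C (hsymB t) (horthB t) _).trans hts
          have hb2 : Real.sqrt (Stmt13.nsq (Stmt13.Fv k C (B t) (x t - xs))) ≤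
              (s1 - s2) / 2 := by
            refine (Real.sqrt_le_sqrt hb).trans ?_
            rw [Real.sqrt_sq (by linarith)]
          linarith
        have h4 : s1 ≤ Real.sqrt (Stmt13.nsq (x (t + 1))) := Real.sqrt_le_sqrt h1
        linarith
      · refine ⟨1, one_pos, fun t _ => ?_⟩
        by_contra hne2
        exact hne ⟨B t, by
          rw [hbaddef, Finset.mem_filter]
          exact ⟨Finset.mem_univ _, fun p hp => hsub t hp, hsymB t, hne2⟩⟩
  obtain ⟨e, hepos, hP⟩ := hkey
  -- convergence to xs
  have hdd_ev : ∀ ε : ℝ, 0 < ε → ∀ᶠ t in atTop, dd t ≤ ε := by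
    intro ε hε
    set ε' := min ε e with hε'def
    have hε'pos : 0 < ε' := lt_min hε hepos
    obtain ⟨j0, hj0⟩ := (hRtend.eventually_lt_const hε'pos).exists
    have hstep : ∀ t, φ j0 ≤ t → dd t ≤ ε' := by
      intro t ht
      induction t, ht using Nat.le_induction with
      | base => exact hj0.le
      | succ t ht ih =>
        have hPfix : Stmt13.Fv k C (B t) xs = xs :=
          hP t (ih.trans (min_le_right _ _))
        have heq : x (t + 1) - xs = Stmt13.Fv k C (B t) (x t - xs) := by
          rw [hxF t]
          conv_lhs => rw [← hPfix]
          exact Stmt13.Fv_sub k C (B t) (x t) xs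
        show Stmt13.nsq (x (t+1) - xs) ≤ ε'
        rw [heq]
        exact (Stmt13.nsq_Fv_mono k C (hsymB t) (horthB t) _).trans ih
    exact eventually_atTop.mpr ⟨φ j0, fun t ht => (hstep t ht).trans (min_le_left _ _)⟩
  have hdd : Tendsto dd atTop (nhds 0) := by
    refine tendsto_order.2 ⟨fun b hb => ?_, fun b hb => ?_⟩
    · exact Filter.Eventually.of_forall fun t => lt_of_lt_of_le hb (hddnn t)
    · filter_upwards [hdd_ev (b / 2) (by linarith)] with t ht
      linarith
  -- arcs vanish at xs
  have harc : ∀ j i : Fin m, (j, i) ∈ A → (C j i) *ᵥ (xs j - xs i) = 0 := by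
    intro jj ii hpA
    set p : Fin m × Fin m := (jj, ii) with hpdef
    set v := C p.1 p.2 *ᵥ (xs p.2 - xs p.1) with hvdef
    have hvv : v ⬝ᵥ v = 0 := by
      have hle : ∀ ε : ℝ, 0 < ε → Real.sqrt (v ⬝ᵥ v) ≤ ε := by
        intro ε hε
        have h1 : ∀ᶠ t in atTop, Q t < (ε ^ 2 / 4) / (2 * ((m:ℝ) + 1)) :=
          hQtend.eventually_lt_const (by positivity)
        have h2 : ∀ᶠ t in atTop, dd t ≤ ε ^ 2 / 64 := hdd_ev _ (by positivity)
        obtain ⟨T, hT⟩ := eventually_atTop.mp (h1.and h2)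
        obtain ⟨t, hTt, hpB⟩ := hio p hpA T
        obtain ⟨hQt, hdt⟩ := hT t hTt
        set vt := C p.1 p.2 *ᵥ (x t p.2 - x t p.1) with hvtdef
        have htr : Real.sqrt (v ⬝ᵥ v) ≤
            Real.sqrt (vt ⬝ᵥ vt) + Real.sqrt ((v - vt) ⬝ᵥ (v - vt)) := by
          have hsplit : v = vt + (v - vt) := by abel
          conv_lhs => rw [hsplit]
          exact Stmt13.sqrt_dot_triangle vt (v - vt)
        have hb1 : vt ⬝ᵥ vt ≤ (2 * ((m:ℝ) + 1)) * Q t :=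
          Stmt13.arc_term_le k C (hsymB t) hpB (x t)
        have hb2 : (v - vt) ⬝ᵥ (v - vt) ≤ 4 * dd t := by
          have hveq : v - vt = C p.1 p.2 *ᵥ ((xs - x t) p.2 - (xs - x t) p.1) := by
            rw [hvdef, hvtdef, ← Matrix.mulVec_sub]
            congr 1
            simp only [Pi.sub_apply]
            abel
          rw [hveq]
          have hoc := Stmt13.orth_contract (C p.1 p.2) (horth p hpA)
            ((xs - x t) p.2 - (xs - x t) p.1)
          have hsub2 := Stmt13.dot_sub_le ((xs - x t) p.2) ((xs - x t) p.1)
          have hd1 := Stmt13.dot_le_nsq (xs - x t) p.2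
          have hd2 := Stmt13.dot_le_nsq (xs - x t) p.1
          have hnn : Stmt13.nsq (xs - x t) = dd t := by
            show Stmt13.nsq (xs - x t) = Stmt13.nsq (x t - xs)
            rw [show xs - x t = -(x t - xs) by abel, Stmt13.nsq_neg]
          rw [hnn] at hd1 hd2
          linarith
        have hs1 : Real.sqrt (vt ⬝ᵥ vt) ≤ ε / 2 := by
          have : vt ⬝ᵥ vt ≤ (ε / 2) ^ 2 := by
            have := mul_le_mul_of_nonneg_left hQt.le
              (show (0:ℝ) ≤ 2 * ((m:ℝ) + 1) by positivity)
            calc vt ⬝ᵥ vt ≤ (2 * ((m:ℝ) + 1)) * Q t := hb1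
              _ ≤ (2 * ((m:ℝ) + 1)) * ((ε ^ 2 / 4) / (2 * ((m:ℝ) + 1))) := this
              _ = ε ^ 2 / 4 := by field_simp
              _ = (ε / 2) ^ 2 := by ring
          refine (Real.sqrt_le_sqrt this).trans ?_
          rw [Real.sqrt_sq (by linarith)]
        have hs2 : Real.sqrt ((v - vt) ⬝ᵥ (v - vt)) ≤ ε / 4 := by
          have : (v - vt) ⬝ᵥ (v - vt) ≤ (ε / 4) ^ 2 := by
            calc (v - vt) ⬝ᵥ (v - vt) ≤ 4 * dd t := hb2
              _ ≤ 4 * (ε ^ 2 / 64) := by linarith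
              _ ≤ (ε / 4) ^ 2 := by nlinarith
          refine (Real.sqrt_le_sqrt this).trans ?_
          rw [Real.sqrt_sq (by linarith)]
        linarith
      by_contra hvne
      have hpos : 0 < Real.sqrt (v ⬝ᵥ v) := by
        have h0 := Stmt13.dot_self_nonneg v
        have : 0 < v ⬝ᵥ v := lt_of_le_of_ne h0 (Ne.symm hvne)
        exact Real.sqrt_pos.mpr this
      have := hle (Real.sqrt (v ⬝ᵥ v) / 2) (by linarith)
      linarith
    have hv0 : v = 0 := dotProduct_self_eq_zero.mp hvv
    have hneg : xs p.1 - xs p.2 = -(xs p.2 - xs p.1) := by abel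
    show C p.1 p.2 *ᵥ (xs p.1 - xs p.2) = 0
    rw [hneg, Matrix.mulVec_neg, ← hvdef, hv0, neg_zero]
  obtain ⟨z, hz⟩ := (hwc xs).mp harc
  refine ⟨z, fun i => ?_⟩
  rw [tendsto_pi_nhds]
  intro l
  have hcoord : ∀ t, |x t i l - z l| ≤ Real.sqrt (dd t) := by
    intro t
    have h1 : (x t i l - z l) ^ 2 ≤ dd t := by
      have h2 := Stmt13.coord_sq_le_nsq (x t - xs) i l
      have h3 : (x t - xs) i l = x t i l - z l := by
        simp [Pi.sub_apply, hz i]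
      rw [h3] at h2
      exact h2
    calc |x t i l - z l| = Real.sqrt ((x t i l - z l) ^ 2) := (Real.sqrt_sq_eq_abs _).symm
      _ ≤ Real.sqrt (dd t) := Real.sqrt_le_sqrt h1
  have hsq : Tendsto (fun t => Real.sqrt (dd t)) atTop (nhds 0) := by
    have := (Real.continuous_sqrt.tendsto 0).comp hdd
    simpa [Function.comp_def] using this
  have h4 : Tendsto (fun t => x t i l - z l) atTop (nhds 0) :=
    squeeze_zero_norm (fun t => by simpa [Real.norm_eq_abs] using hcoord t) hsq
  have h5 := h4.add_const (z l)
  simpa using h5
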